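/- Closed form of the ground state variational problem: Let n ≥ 1, let Q̃ ∈ ℝ^{n×n} be symmetric positive definite, let β ∈ (0,∞)^n with 𝛃 = diag(β), and let h ∈ ℝ^n. Then the infimum over all symmetric matrices Λ ∈ ℝ^{n×n} with Λ − √2·I positive semidefinite of ( (1/4) h^T 𝛃^{−1/2} (Λ − √(Λ² − 2I)) 𝛃^{−1/2} h + Tr(Λ 𝛃^{1/2} Q̃ 𝛃^{1/2}) ) equals GSE(β,h,Q̃), where √(Λ² − 2I) denotes the positive semidefinite square root of Λ² − 2I (which is positive semidefinite since Λ ≥ √2·I). -/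

import Mathlib

noncomputable section

open MeasureTheory ProbabilityTheory Filter Matrix Real
open scoped BigOperators ENNReal NNReal

/-- The law of the disorder: i.i.d. standard Gaussian entries `J i j`. -/
def disorder (N : ℕ) : Measure (Fin N → Fin N → ℝ) :=
  Measure.pi fun _ => Measure.pi fun _ => gaussianReal 0 1

/-- Euclidean dot product on `Fin N → ℝ`. -/
def dot {N : ℕ} (x y : Fin N → ℝ) : ℝ := ∑ i, x i * y i

/-- The 2-spin SK Hamiltonian `H_N(σ) = √N ∑_{ij} J_{ij} σ_i σ_j`. -/
def ham (N : ℕ) (J : Fin N → Fin N → ℝ) (σ : Fin N → ℝ) : ℝ :=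
  Real.sqrt N * ∑ i, ∑ j, J i j * σ i * σ j

/-- The uniform probability measure on the unit sphere of `ℝ^N`
(the normalized spherical measure obtained from Lebesgue measure on
`EuclideanSpace ℝ (Fin N)`). -/
def sphereUniform (N : ℕ) : Measure (Fin N → ℝ) :=
  Measure.map (fun σ : Metric.sphere (0 : EuclideanSpace ℝ (Fin N)) 1 =>
      EuclideanSpace.equiv (Fin N) ℝ σ.val)
    (((volume : Measure (EuclideanSpace ℝ (Fin N))).toSphere Set.univ)⁻¹ •
      (volume : Measure (EuclideanSpace ℝ (Fin N))).toSphere)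

/-- The product of `n` uniform sphere measures: the law of `σ⃗ = (σ^1, …, σ^n)`. -/
def spheres (n N : ℕ) : Measure (Fin n → Fin N → ℝ) :=
  Measure.pi fun _ => sphereUniform N

/-- The set `Q_ε` of replicas whose overlaps are within `ε` of `Q`. -/
def overlapSet (n N : ℕ) (Q : Matrix (Fin n) (Fin n) ℝ) (ε : ℝ) :
    Set (Fin n → Fin N → ℝ) :=
  {σ | ∀ k l, |dot (σ k) (σ l) - Q k l| ≤ ε}

/-- The free energy `F^ε_N(β, h⃗, Q)`. -/
def freeEnergy (n N : ℕ) (β : Fin n → ℝ) (hvec : Fin n → Fin N → ℝ)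
    (Q : Matrix (Fin n) (Fin n) ℝ) (ε : ℝ) (J : Fin N → Fin N → ℝ) : ℝ :=
  (1 / (N : ℝ)) * Real.log (∫ σ in overlapSet n N Q ε,
      Real.exp (∑ k, (β k * ham N J (σ k) + N * dot (hvec k) (σ k))) ∂ spheres n N)

/-- The partition function without external field, `Z^ε_N(β, 0, Q)`. -/
def partitionZ (n N : ℕ) (β : Fin n → ℝ) (Q : Matrix (Fin n) (Fin n) ℝ)
    (ε : ℝ) (J : Fin N → Fin N → ℝ) : ℝ :=
  ∫ σ in overlapSet n N Q ε, Real.exp (∑ k, β k * ham N J (σ k)) ∂ spheres n N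

/-- The overlap matrix `m⃗ m⃗ᵀ`. -/
def overlap {n N : ℕ} (m : Fin n → Fin N → ℝ) : Matrix (Fin n) (Fin n) ℝ :=
  Matrix.of fun k l => dot (m k) (m l)

/-- `βᵀ A^{⊙2} β`, the quadratic form of the entrywise square of `A`. -/
def quadSq {n : ℕ} (β : Fin n → ℝ) (A : Matrix (Fin n) (Fin n) ℝ) : ℝ :=
  ∑ k, ∑ l, β k * β l * (A k l) ^ 2

/-- The TAP free energy `F_TAP(m⃗)`. -/
def FTAP (n N : ℕ) (β : Fin n → ℝ) (hvec : Fin n → Fin N → ℝ)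
    (Q : Matrix (Fin n) (Fin n) ℝ) (J : Fin N → Fin N → ℝ)
    (m : Fin n → Fin N → ℝ) : ℝ :=
  ((N : ℝ) / 2) * Real.log (Q - overlap m).det + ∑ k, β k * ham N J (m k)
    + N * ∑ k, dot (hvec k) (m k) + ((N : ℝ) / 2) * quadSq β (Q - overlap m)

/-- The spectral norm (operator norm with respect to Euclidean norms). -/
def matSpectralNorm {n : ℕ} (A : Matrix (Fin n) (Fin n) ℝ) : ℝ :=
  ‖LinearMap.toContinuousLinearMap (Matrix.toEuclideanLin A)‖

/-- The Frobenius norm of a matrix. -/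
def frob {n : ℕ} (A : Matrix (Fin n) (Fin n) ℝ) : ℝ :=
  Real.sqrt (∑ k, ∑ l, (A k l) ^ 2)

/-- `𝛃^{1/2}`: the diagonal matrix with entries `√(β_k)` (the positive semidefinite
square root of `diag β` for `β ≥ 0`). -/
def sqrtDiag {n : ℕ} (β : Fin n → ℝ) : Matrix (Fin n) (Fin n) ℝ :=
  Matrix.diagonal fun k => Real.sqrt (β k)

/-- `𝛃^{-1/2}`: the diagonal matrix with entries `(√(β_k))⁻¹`. -/
def invSqrtDiag {n : ℕ} (β : Fin n → ℝ) : Matrix (Fin n) (Fin n) ℝ :=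
  Matrix.diagonal fun k => (Real.sqrt (β k))⁻¹

/-- The Plefka set `Plef_n(Q, β)` of `n × n` constraint matrices: entries in `[-1,1]`,
`0 ≤ Q̃ < Q` in the Loewner order, and `‖𝛃^{1/2}(Q - Q̃)𝛃^{1/2}‖₂ ≤ 1/√2`. -/
def plefkaMat (n : ℕ) (Q : Matrix (Fin n) (Fin n) ℝ) (β : Fin n → ℝ) :
    Set (Matrix (Fin n) (Fin n) ℝ) :=
  {Qt | (∀ k l, |Qt k l| ≤ 1) ∧ Qt.PosSemidef ∧ (Q - Qt).PosDef ∧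
    matSpectralNorm (sqrtDiag β * (Q - Qt) * sqrtDiag β) ≤ 1 / Real.sqrt 2}

/-- The Plefka set `Plef_N(Q, β)` of magnetization vectors. -/
def plefkaMag (n N : ℕ) (Q : Matrix (Fin n) (Fin n) ℝ) (β : Fin n → ℝ) :
    Set (Fin n → Fin N → ℝ) :=
  {m | overlap m ∈ plefkaMat n Q β}

open scoped Classical in
/-- The positive semidefinite square root of a positive semidefinite matrix
(junk value `0` off the positive semidefinite matrices). -/
def msqrt {n : ℕ} (A : Matrix (Fin n) (Fin n) ℝ) : Matrix (Fin n) (Fin n) ℝ :=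
  if h : A.PosSemidef then
    h.1.eigenvectorUnitary.1 * Matrix.diagonal ((↑) ∘ (√·) ∘ h.1.eigenvalues) *
      (star h.1.eigenvectorUnitary : Matrix (Fin n) (Fin n) ℝ)
  else 0

/-- The ground state energy functional `GSE(β, h, Q̃)`. -/
def GSE (n : ℕ) (β h : Fin n → ℝ) (Qt : Matrix (Fin n) (Fin n) ℝ) : ℝ :=
  Real.sqrt 2 * Matrix.trace (msqrt
    (msqrt ((1 / 2 : ℝ) • Matrix.vecMulVec h h
        + Matrix.diagonal β * Qt * Matrix.diagonal β) * Qt *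
      msqrt ((1 / 2 : ℝ) • Matrix.vecMulVec h h
        + Matrix.diagonal β * Qt * Matrix.diagonal β)))

/-- The high temperature region `HT(Q)`. -/
def HTset (n : ℕ) (Q : Matrix (Fin n) (Fin n) ℝ) : Set (Fin n → ℝ) :=
  {β | (∀ k, 0 ≤ β k) ∧ matSpectralNorm (sqrtDiag β * Q * sqrtDiag β) ≤ 1 / Real.sqrt 2}

/-- The second moment functional `V(A)`. -/
def secondMomentV (n : ℕ) (Q : Matrix (Fin n) (Fin n) ℝ) (β : Fin n → ℝ)
    (A : Matrix (Fin n) (Fin n) ℝ) : ℝ :=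
  quadSq β A + (1 / 2) * Real.log (Matrix.fromBlocks Q A Aᵀ Q).det

/-- The effective constraint matrix `Q̂(m⃗)`. -/
def Qhat {n N : ℕ} (Q : Matrix (Fin n) (Fin n) ℝ) (m : Fin n → Fin N → ℝ) :
    Matrix (Fin n) (Fin n) ℝ :=
  Matrix.of fun k l => (Q k l - dot (m k) (m l)) /
    (Real.sqrt (1 - dot (m k) (m k)) * Real.sqrt (1 - dot (m l) (m l)))

/-- A vector of `ℝ^d` viewed in `ℝ^N` via a linear isometric embedding of
Euclidean spaces (whose range is a subspace of dimension `d`). -/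
def emb {d N : ℕ} (φ : EuclideanSpace ℝ (Fin d) →ₗᵢ[ℝ] EuclideanSpace ℝ (Fin N))
    (x : Fin d → ℝ) : Fin N → ℝ :=
  EuclideanSpace.equiv (Fin N) ℝ (φ ((EuclideanSpace.equiv (Fin d) ℝ).symm x))

section PSDSqrt

open scoped MatrixOrder

variable {m : Type*} [Fintype m] [DecidableEq m]

/-- The positive semidefinite square root of a positive semidefinite real matrix. -/
def Matrix.PosSemidef.sqrt {A : Matrix m m ℝ} (hA : A.PosSemidef) : Matrix m m ℝ :=
  hA.1.eigenvectorUnitary.1 * Matrix.diagonal ((↑) ∘ (√·) ∘ hA.1.eigenvalues) *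
    (star hA.1.eigenvectorUnitary : Matrix m m ℝ)

lemma Matrix.PosSemidef.sqrt_eq_cfc {A : Matrix m m ℝ} (hA : A.PosSemidef) :
    hA.sqrt = CFC.sqrt A := by
  rw [CFC.sqrt_eq_real_sqrt A hA.nonneg, cfcₙ_eq_cfc (hf0 := Real.sqrt_zero), hA.1.cfc_eq]
  rfl

lemma Matrix.PosSemidef.posSemidef_sqrt {A : Matrix m m ℝ} (hA : A.PosSemidef) :
    hA.sqrt.PosSemidef := by
  rw [hA.sqrt_eq_cfc]; exact Matrix.nonneg_iff_posSemidef.mp (CFC.sqrt_nonneg A)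

lemma Matrix.PosSemidef.sqrt_mul_self {A : Matrix m m ℝ} (hA : A.PosSemidef) :
    hA.sqrt * hA.sqrt = A := by
  rw [hA.sqrt_eq_cfc]; exact CFC.sqrt_mul_sqrt_self A hA.nonneg

lemma Matrix.PosSemidef.eq_sqrt_of_sq_eq {A B : Matrix m m ℝ} (hB : B.PosSemidef)
    (hA : A.PosSemidef) (h : B ^ 2 = A) : B = hA.sqrt := by
  rw [hA.sqrt_eq_cfc]; exact (CFC.sqrt_unique (by rw [← pow_two, h]) hB.nonneg).symm

end PSDSqrt

namespace GSaux

set_option linter.unusedSectionVars false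

variable {m : Type*} [Fintype m] [DecidableEq m]

lemma herm_smul {A : Matrix m m ℝ} (hA : A.IsHermitian) (c : ℝ) : (c • A).IsHermitian := by
  unfold Matrix.IsHermitian at *
  rw [conjTranspose_smul, hA, star_trivial]

lemma herm_transpose_eq {A : Matrix m m ℝ} (hA : A.IsHermitian) : Aᵀ = A := by
  rw [← conjTranspose_eq_transpose_of_trivial, hA]

lemma posSemidef_smul {A : Matrix m m ℝ} (hA : A.PosSemidef) {c : ℝ} (hc : 0 ≤ c) :
    (c • A).PosSemidef := by
  refine posSemidef_iff_dotProduct_mulVec.mpr ⟨herm_smul hA.1 c, fun x => ?_⟩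
  rw [smul_mulVec, dotProduct_smul, smul_eq_mul]
  exact mul_nonneg hc (hA.dotProduct_mulVec_nonneg x)

lemma posDef_smul {A : Matrix m m ℝ} (hA : A.PosDef) {c : ℝ} (hc : 0 < c) :
    (c • A).PosDef := by
  refine posDef_iff_dotProduct_mulVec.mpr ⟨herm_smul hA.1 c, fun x hx => ?_⟩
  rw [smul_mulVec, dotProduct_smul, smul_eq_mul]
  exact mul_pos hc (hA.dotProduct_mulVec_pos hx)

lemma sym_dot_eq {B : Matrix m m ℝ} (hB : B.IsHermitian) (x y : m → ℝ) :
    x ⬝ᵥ B *ᵥ y = (B *ᵥ x) ⬝ᵥ y := by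
  rw [dotProduct_mulVec]
  congr 1
  rw [← mulVec_transpose, herm_transpose_eq hB]

lemma posDef_of_isUnit {A : Matrix m m ℝ} (hA : A.PosSemidef) (h : IsUnit A.det) :
    A.PosDef := by
  refine posDef_iff_dotProduct_mulVec.mpr ⟨hA.1, fun x hx => ?_⟩
  rcases lt_or_eq_of_le (hA.dotProduct_mulVec_nonneg x) with h' | h'
  · exact h'
  · exfalso
    apply hx
    have key : star x ⬝ᵥ A *ᵥ x = (hA.sqrt *ᵥ x) ⬝ᵥ (hA.sqrt *ᵥ x) := by
      have e1 : x ⬝ᵥ (hA.sqrt * hA.sqrt) *ᵥ x = (hA.sqrt *ᵥ x) ⬝ᵥ (hA.sqrt *ᵥ x) := by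
        rw [← mulVec_mulVec, sym_dot_eq hA.posSemidef_sqrt.1]
      rw [star_trivial, ← e1, hA.sqrt_mul_self]
    have hsq : hA.sqrt *ᵥ x = 0 :=
      (dotProduct_self_eq_zero).mp (by rw [← key, ← h'])
    have hAx : A *ᵥ x = 0 := by
      rw [← hA.sqrt_mul_self, ← mulVec_mulVec, hsq, mulVec_zero]
    have := congrArg (fun v => A⁻¹ *ᵥ v) hAx
    simpa [mulVec_mulVec, nonsing_inv_mul _ h] using this

end GSaux



namespace GSaux

set_option linter.unusedSectionVars false

variable {m : Type*} [Fintype m] [DecidableEq m]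

lemma commute_diagonal_map {Y : Matrix m m ℝ} {d : m → ℝ} (f : ℝ → ℝ)
    (hY : Y * diagonal d = diagonal d * Y) :
    Y * diagonal (f ∘ d) = diagonal (f ∘ d) * Y := by
  ext i j
  have h1 := congrFun (congrFun hY i) j
  rw [mul_diagonal, diagonal_mul] at h1
  rw [mul_diagonal, diagonal_mul]
  rcases eq_or_ne (d i) (d j) with hd | hd
  · simp only [Function.comp_apply, hd, mul_comm]
  · have hY0 : Y i j = 0 := by
      by_contra hY0
      exact hd (mul_left_cancel₀ hY0 (by linarith [h1])).symm
    simp [hY0]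

lemma commute_sqrt {A X : Matrix m m ℝ} (hA : A.PosSemidef) (hX : X * A = A * X) :
    X * hA.sqrt = hA.sqrt * X := by
  set U : Matrix m m ℝ := ↑(hA.1.eigenvectorUnitary) with hUdef
  have hUs : U * star U = 1 := mem_unitaryGroup_iff.mp hA.1.eigenvectorUnitary.2
  have hsU : star U * U = 1 := mem_unitaryGroup_iff'.mp hA.1.eigenvectorUnitary.2
  set e : m → ℝ := hA.1.eigenvalues with he
  have hco : (RCLike.ofReal ∘ e : m → ℝ) = e := by funext i; simp
  have hco2 : (RCLike.ofReal ∘ Real.sqrt ∘ e : m → ℝ) = Real.sqrt ∘ e := by funext i; simp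
  have hspec : A = U * diagonal e * star U := by
    have := hA.1.spectral_theorem
    rwa [Unitary.conjStarAlgAut_apply, ← he, hco] at this
  have hsqrt : hA.sqrt = U * diagonal (Real.sqrt ∘ e) * star U := by
    rfl
  set Y : Matrix m m ℝ := star U * X * U with hY
  have hconj : ∀ Z W : Matrix m m ℝ,
      (U * Z * star U) * (U * W * star U) = U * (Z * W) * star U := by
    intro Z W
    calc (U * Z * star U) * (U * W * star U)
        = U * Z * (star U * U) * W * star U := by
          simp only [Matrix.mul_assoc]
      _ = U * (Z * W) * star U := by rw [hsU]; simp only [Matrix.mul_one, Matrix.mul_assoc]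
  have hXconj : X = U * Y * star U := by
    calc X = (U * star U) * X * (U * star U) := by rw [hUs]; simp
      _ = U * (star U * X * U) * star U := by simp only [Matrix.mul_assoc]
  have h2 : U * (Y * diagonal e) * star U = U * (diagonal e * Y) * star U := by
    calc U * (Y * diagonal e) * star U
        = (U * Y * star U) * (U * diagonal e * star U) := (hconj _ _).symm
      _ = X * A := by rw [← hXconj, ← hspec]
      _ = A * X := hX
      _ = (U * diagonal e * star U) * (U * Y * star U) := by rw [← hXconj, ← hspec]
      _ = U * (diagonal e * Y) * star U := hconj _ _
  have hYD : Y * diagonal e = diagonal e * Y := by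
    calc Y * diagonal e
        = (star U * U) * (Y * diagonal e) * (star U * U) := by rw [hsU]; simp
      _ = star U * (U * (Y * diagonal e) * star U) * U := by simp only [Matrix.mul_assoc]
      _ = star U * (U * (diagonal e * Y) * star U) * U := by rw [h2]
      _ = (star U * U) * (diagonal e * Y) * (star U * U) := by simp only [Matrix.mul_assoc]
      _ = diagonal e * Y := by rw [hsU]; simp
  have hYS : Y * diagonal (Real.sqrt ∘ e) = diagonal (Real.sqrt ∘ e) * Y :=
    commute_diagonal_map Real.sqrt hYD
  rw [hsqrt, hXconj, hconj, hconj, hYS]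

end GSaux



namespace GSaux

set_option linter.unusedSectionVars false
set_option maxHeartbeats 800000

variable {m : Type*} [Fintype m] [DecidableEq m]

lemma herm_transpose_eq' {A : Matrix m m ℝ} (hA : A.IsHermitian) : Aᵀ = A := by
  rw [← conjTranspose_eq_transpose_of_trivial, hA]

lemma posSemidef_mul_of_commute {A B : Matrix m m ℝ} (hA : A.PosSemidef) (hB : B.PosSemidef)
    (hAB : A * B = B * A) (hc : B * hA.sqrt = hA.sqrt * B) : (A * B).PosSemidef := by
  have key : A * B = hA.sqrt * B * hA.sqrt := by
    calc A * B = (hA.sqrt * hA.sqrt) * B := by rw [hA.sqrt_mul_self]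
      _ = hA.sqrt * (hA.sqrt * B) := by rw [Matrix.mul_assoc]
      _ = hA.sqrt * (B * hA.sqrt) := by rw [hc]
      _ = hA.sqrt * B * hA.sqrt := by rw [Matrix.mul_assoc]
  rw [key]
  have := hB.mul_mul_conjTranspose_same hA.sqrt
  rwa [hA.posSemidef_sqrt.1] at this

lemma sub_posSemidef_of_sq {K E : Matrix m m ℝ} (hK : K.PosDef) (hE : E.PosSemidef)
    (hKE : (K * K - E * E).PosSemidef) : (K - E).PosSemidef := by
  have hH : (K - E).IsHermitian := hK.1.sub hE.1
  apply hH.posSemidef_iff_eigenvalues_nonneg.mpr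
  intro i
  show (0:ℝ) ≤ hH.eigenvalues i
  set μ : ℝ := hH.eigenvalues i with hμ
  set v : m → ℝ := ⇑(hH.eigenvectorBasis i) with hvdef
  have hv' : (K - E) *ᵥ v = μ • v := hH.mulVec_eigenvectorBasis i
  have hvne : v ≠ 0 := by
    intro h0
    have hz : ∀ j, hH.eigenvectorBasis i j = 0 := fun j => congrFun h0 j
    have h1n := hH.eigenvectorBasis.orthonormal.1 i
    rw [EuclideanSpace.norm_eq] at h1n
    simp [hz] at h1n
  have hplus : 0 < v ⬝ᵥ (K + E) *ᵥ v := by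
    have := (hK.add_posSemidef hE).dotProduct_mulVec_pos hvne
    simpa using this
  have h1 : 0 ≤ v ⬝ᵥ (K * K - E * E) *ᵥ v := by
    have := hKE.dotProduct_mulVec_nonneg v
    simpa using this
  have hmat : (K + E) * (K - E) + (K - E) * (K + E) = (K * K - E * E) + (K * K - E * E) := by
    noncomm_ring
  have hdot1 : v ⬝ᵥ ((K + E) * (K - E)) *ᵥ v = μ * (v ⬝ᵥ (K + E) *ᵥ v) := by
    rw [← mulVec_mulVec, hv', mulVec_smul, dotProduct_smul, smul_eq_mul]
  have hdot2 : v ⬝ᵥ ((K - E) * (K + E)) *ᵥ v = μ * (v ⬝ᵥ (K + E) *ᵥ v) := by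
    rw [← mulVec_mulVec]
    rw [show v ⬝ᵥ (K - E) *ᵥ ((K + E) *ᵥ v) = ((K - E) *ᵥ v) ⬝ᵥ ((K + E) *ᵥ v) from ?_]
    · rw [hv', smul_dotProduct, smul_eq_mul]
    · rw [dotProduct_mulVec, ← mulVec_transpose, herm_transpose_eq' hH]
  have hsum : v ⬝ᵥ ((K + E) * (K - E)) *ᵥ v + v ⬝ᵥ ((K - E) * (K + E)) *ᵥ v
      = v ⬝ᵥ (K * K - E * E) *ᵥ v + v ⬝ᵥ (K * K - E * E) *ᵥ v := by
    rw [← dotProduct_add, ← add_mulVec, hmat, add_mulVec, dotProduct_add]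
  nlinarith [hplus, h1, hsum, hdot1, hdot2]

lemma posSemidef_vecMulVec (u : m → ℝ) : (vecMulVec u u).PosSemidef := by
  refine posSemidef_iff_dotProduct_mulVec.mpr ⟨?_, ?_⟩
  · ext i j
    simp [vecMulVec_apply, mul_comm]
  · intro x
    have key : star x ⬝ᵥ (vecMulVec u u) *ᵥ x = (u ⬝ᵥ x) * (u ⬝ᵥ x) := by
      rw [star_trivial]
      simp only [dotProduct, mulVec, vecMulVec_apply, Finset.mul_sum, Finset.sum_mul]
      rw [Finset.sum_comm]
      congr 1
      funext j
      congr 1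
      funext i
      ring
    rw [key]
    exact mul_self_nonneg _

lemma trace_mul_transpose_self_nonneg (Y : Matrix m m ℝ) : 0 ≤ (Y * Yᵀ).trace := by
  have : (Y * Yᵀ).trace = ∑ i, ∑ j, (Y i j)^2 := by
    simp [Matrix.trace, Matrix.diag, Matrix.mul_apply, sq]
  rw [this]
  positivity

end GSaux
namespace GSaux

set_option linter.unusedSectionVars false
set_option maxHeartbeats 1600000

variable {m : ℕ}

lemma msqrt_eq {A : Matrix (Fin m) (Fin m) ℝ} (hA : A.PosSemidef) : msqrt A = hA.sqrt :=
  dif_pos hA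

lemma msqrt_posSemidef {A : Matrix (Fin m) (Fin m) ℝ} (hA : A.PosSemidef) :
    (msqrt A).PosSemidef := by
  rw [msqrt_eq hA]; exact hA.posSemidef_sqrt

lemma msqrt_mul_self {A : Matrix (Fin m) (Fin m) ℝ} (hA : A.PosSemidef) :
    msqrt A * msqrt A = A := by
  rw [msqrt_eq hA]; exact hA.sqrt_mul_self

lemma msqrt_herm {A : Matrix (Fin m) (Fin m) ℝ} (hA : A.PosSemidef) :
    (msqrt A).IsHermitian :=
  (msqrt_posSemidef hA).1

lemma msqrt_unique {A B : Matrix (Fin m) (Fin m) ℝ} (hB : B.PosSemidef) (hA : A.PosSemidef)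
    (hBA : B * B = A) : msqrt A = B := by
  rw [msqrt_eq hA]
  exact (hB.eq_sqrt_of_sq_eq hA (by rw [pow_two, hBA])).symm

lemma commute_msqrt {A X : Matrix (Fin m) (Fin m) ℝ} (hA : A.PosSemidef) (hX : X * A = A * X) :
    X * msqrt A = msqrt A * X := by
  rw [msqrt_eq hA]; exact commute_sqrt hA hX

lemma msqrt_posDef {A : Matrix (Fin m) (Fin m) ℝ} (hA : A.PosDef) : (msqrt A).PosDef := by
  apply posDef_of_isUnit (msqrt_posSemidef hA.posSemidef)
  have hdet : (msqrt A).det * (msqrt A).det = A.det := by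
    rw [← Matrix.det_mul, msqrt_mul_self hA.posSemidef]
  have : IsUnit ((msqrt A).det * (msqrt A).det) := by
    rw [hdet]; exact isUnit_iff_ne_zero.mpr hA.det_pos.ne'
  exact isUnit_of_mul_isUnit_left this

end GSaux

namespace GSaux

set_option linter.unusedSectionVars false
set_option maxHeartbeats 1600000

variable {m : Type*} [Fintype m] [DecidableEq m]

lemma psd_conj {A : Matrix m m ℝ} (hA : A.PosSemidef) (C : Matrix m m ℝ) :
    (C * A * Cᵀ).PosSemidef := by
  have := hA.mul_mul_conjTranspose_same C
  rwa [conjTranspose_eq_transpose_of_trivial] at this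

lemma posDef_isUnit_det {A : Matrix m m ℝ} (hA : A.PosDef) : IsUnit A.det :=
  isUnit_iff_ne_zero.mpr hA.det_pos.ne'

lemma posDef_conj {A C : Matrix m m ℝ} (hA : A.PosDef) (hC : IsUnit C.det) :
    (C * A * Cᵀ).PosDef := by
  apply posDef_of_isUnit (psd_conj hA.posSemidef C)
  simp only [Matrix.det_mul, Matrix.det_transpose]
  exact (hC.mul (isUnit_iff_ne_zero.mpr hA.det_pos.ne')).mul hC

lemma mul_inv_cancel_pd {A : Matrix m m ℝ} (hA : A.PosDef) : A * A⁻¹ = 1 :=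
  Matrix.mul_nonsing_inv _ (posDef_isUnit_det hA)

lemma inv_mul_cancel_pd {A : Matrix m m ℝ} (hA : A.PosDef) : A⁻¹ * A = 1 :=
  Matrix.nonsing_inv_mul _ (posDef_isUnit_det hA)

lemma dot_mulVec_eq_trace (x : m → ℝ) (A : Matrix m m ℝ) :
    x ⬝ᵥ (A *ᵥ x) = (A * vecMulVec x x).trace := by
  simp only [dotProduct, Matrix.mulVec, Matrix.trace, Matrix.diag, Matrix.mul_apply,
    vecMulVec_apply]
  congr 1; funext i
  rw [Finset.mul_sum]
  congr 1; funext j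
  ring

end GSaux

section DiagLemmas

variable {n : ℕ} {β : Fin n → ℝ}

lemma sqrtDiag_mul_self (hβ : ∀ k, 0 < β k) :
    sqrtDiag β * sqrtDiag β = Matrix.diagonal β := by
  rw [sqrtDiag, Matrix.diagonal_mul_diagonal]
  exact congrArg Matrix.diagonal (funext fun k => Real.mul_self_sqrt (hβ k).le)

lemma sqrtDiag_mul_inv (hβ : ∀ k, 0 < β k) : sqrtDiag β * invSqrtDiag β = 1 := by
  rw [sqrtDiag, invSqrtDiag, Matrix.diagonal_mul_diagonal, ← Matrix.diagonal_one]
  exact congrArg Matrix.diagonal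
    (funext fun k => mul_inv_cancel₀ (Real.sqrt_pos.mpr (hβ k)).ne')

lemma inv_mul_sqrtDiag (hβ : ∀ k, 0 < β k) : invSqrtDiag β * sqrtDiag β = 1 := by
  rw [sqrtDiag, invSqrtDiag, Matrix.diagonal_mul_diagonal, ← Matrix.diagonal_one]
  exact congrArg Matrix.diagonal
    (funext fun k => inv_mul_cancel₀ (Real.sqrt_pos.mpr (hβ k)).ne')

lemma invSqrtDiag_mul_self (hβ : ∀ k, 0 < β k) : invSqrtDiag β * invSqrtDiag β
    = Matrix.diagonal (fun k => (β k)⁻¹) := by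
  rw [invSqrtDiag, Matrix.diagonal_mul_diagonal]
  refine congrArg Matrix.diagonal (funext fun k => ?_)
  rw [← mul_inv, Real.mul_self_sqrt (hβ k).le]

lemma diagBinv_mul_diagB (hβ : ∀ k, 0 < β k) :
    Matrix.diagonal (fun k => (β k)⁻¹) * Matrix.diagonal β = 1 := by
  rw [Matrix.diagonal_mul_diagonal, ← Matrix.diagonal_one]
  exact congrArg Matrix.diagonal (funext fun k => inv_mul_cancel₀ (hβ k).ne')

lemma diagB_mul_diagBinv (hβ : ∀ k, 0 < β k) :
    Matrix.diagonal β * Matrix.diagonal (fun k => (β k)⁻¹) = 1 := by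
  rw [Matrix.diagonal_mul_diagonal, ← Matrix.diagonal_one]
  exact congrArg Matrix.diagonal (funext fun k => mul_inv_cancel₀ (hβ k).ne')

lemma sqrtDiag_transpose : (sqrtDiag β)ᵀ = sqrtDiag β := Matrix.diagonal_transpose _

lemma invSqrtDiag_transpose : (invSqrtDiag β)ᵀ = invSqrtDiag β := Matrix.diagonal_transpose _

lemma sqrtDiag_posDef (hβ : ∀ k, 0 < β k) : (sqrtDiag β).PosDef :=
  Matrix.posDef_diagonal_iff.mpr fun k => Real.sqrt_pos.mpr (hβ k)

lemma invSqrtDiag_posDef (hβ : ∀ k, 0 < β k) : (invSqrtDiag β).PosDef :=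
  Matrix.posDef_diagonal_iff.mpr fun k => inv_pos.mpr (Real.sqrt_pos.mpr (hβ k))

lemma diagBinv_posDef (hβ : ∀ k, 0 < β k) :
    (Matrix.diagonal (fun k => (β k)⁻¹) : Matrix (Fin n) (Fin n) ℝ).PosDef :=
  Matrix.posDef_diagonal_iff.mpr fun k => inv_pos.mpr (hβ k)

lemma diagB_posDef (hβ : ∀ k, 0 < β k) :
    (Matrix.diagonal β : Matrix (Fin n) (Fin n) ℝ).PosDef :=
  Matrix.posDef_diagonal_iff.mpr hβ

end DiagLemmas
namespace GSaux

set_option linter.unusedSectionVars false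
set_option maxHeartbeats 1600000

variable {n : ℕ}

lemma dot_eq {N : ℕ} (x y : Fin N → ℝ) : dot x y = x ⬝ᵥ y := rfl

/-- The matrix `M = ½ h hᵀ + 𝛃 Q̃ 𝛃`. -/
def Mm (Qt : Matrix (Fin n) (Fin n) ℝ) (β h : Fin n → ℝ) : Matrix (Fin n) (Fin n) ℝ :=
  (1 / 2 : ℝ) • Matrix.vecMulVec h h + Matrix.diagonal β * Qt * Matrix.diagonal β

lemma Mm_posDef {Qt : Matrix (Fin n) (Fin n) ℝ} {β : Fin n → ℝ} (h : Fin n → ℝ)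
    (hQtpd : Qt.PosDef) (hβ : ∀ k, 0 < β k) : (Mm Qt β h).PosDef := by
  have h1 : (Matrix.diagonal β * Qt * Matrix.diagonal β).PosDef := by
    have := posDef_conj hQtpd (posDef_isUnit_det (diagB_posDef hβ))
    rwa [Matrix.diagonal_transpose] at this
  exact Matrix.PosDef.posSemidef_add
    (posSemidef_smul (posSemidef_vecMulVec h) (by norm_num)) h1

lemma GSE_eq (Qt : Matrix (Fin n) (Fin n) ℝ) (β h : Fin n → ℝ) :
    GSE n β h Qt
      = Real.sqrt 2 * (msqrt (msqrt (Mm Qt β h) * Qt * msqrt (Mm Qt β h))).trace := rfl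

/-- Core trace AM–GM inequality. -/
lemma core_ineq {M Qt : Matrix (Fin n) (Fin n) ℝ} (hM : M.PosDef) (hQt : Qt.PosDef)
    {T : Matrix (Fin n) (Fin n) ℝ} (hT : T.PosDef) :
    Real.sqrt 2 * (msqrt (msqrt M * Qt * msqrt M)).trace
      ≤ (1 / 2) * (T * M).trace + (T⁻¹ * Qt).trace := by
  have hGpd : (msqrt M).PosDef := msqrt_posDef hM
  set G := msqrt M with hGdef
  have hGG : G * G = M := msqrt_mul_self hM.posSemidef
  have hGh : Gᵀ = G := herm_transpose_eq (msqrt_herm hM.posSemidef)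
  have hGdet : IsUnit G.det := posDef_isUnit_det hGpd
  have hDpd : (G * Qt * G).PosDef := by
    have := posDef_conj hQt hGdet
    rwa [hGh] at this
  set E := msqrt (G * Qt * G) with hEdef
  have hEpd : E.PosDef := msqrt_posDef hDpd
  have hEE : E * E = G * Qt * G := msqrt_mul_self hDpd.posSemidef
  have hEh : Eᵀ = E := herm_transpose_eq (msqrt_herm hDpd.posSemidef)
  have hPpd : (G * T * G).PosDef := by
    have := posDef_conj hT hGdet
    rwa [hGh] at this
  set P := G * T * G with hPdef
  have hApd : (msqrt P).PosDef := msqrt_posDef hPpd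
  set A := msqrt P with hAdef
  have hAA : A * A = P := msqrt_mul_self hPpd.posSemidef
  have hAh : Aᵀ = A := herm_transpose_eq (msqrt_herm hPpd.posSemidef)
  have hAdet : IsUnit A.det := posDef_isUnit_det hApd
  have hAinvh : (A⁻¹)ᵀ = A⁻¹ := by rw [Matrix.transpose_nonsing_inv, hAh]
  -- trace identities
  have tTM : (T * M).trace = P.trace := by
    rw [← hGG, hPdef]
    calc (T * (G * G)).trace = ((T * G) * G).trace := by rw [Matrix.mul_assoc]
      _ = (G * (T * G)).trace := Matrix.trace_mul_comm _ _
      _ = (G * T * G).trace := by rw [Matrix.mul_assoc]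
  have hPinv : P⁻¹ = G⁻¹ * (T⁻¹ * G⁻¹) := by
    rw [hPdef, Matrix.mul_inv_rev, Matrix.mul_inv_rev]
  have tTQ : (P⁻¹ * (E * E)).trace = (T⁻¹ * Qt).trace := by
    rw [hEE, hPinv]
    calc (G⁻¹ * (T⁻¹ * G⁻¹) * (G * Qt * G)).trace
        = (G⁻¹ * ((T⁻¹ * G⁻¹) * (G * Qt * G))).trace := by rw [Matrix.mul_assoc]
      _ = (((T⁻¹ * G⁻¹) * (G * Qt * G)) * G⁻¹).trace := Matrix.trace_mul_comm _ _
      _ = (T⁻¹ * (G⁻¹ * (G * (Qt * (G * G⁻¹))))).trace := by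
          simp only [Matrix.mul_assoc]
      _ = (T⁻¹ * Qt).trace := by
          rw [Matrix.mul_nonsing_inv _ hGdet, Matrix.mul_one,
            Matrix.nonsing_inv_mul_cancel_left _ _ hGdet]
  -- the AM-GM via a square
  have hs2pos : (0:ℝ) < Real.sqrt 2 := Real.sqrt_pos.mpr (by norm_num)
  have hc2 : Real.sqrt 2 * Real.sqrt 2 = 2 := Real.mul_self_sqrt (by norm_num)
  set c : ℝ := Real.sqrt (Real.sqrt 2)⁻¹ with hcdef
  have hcpos : 0 < c := Real.sqrt_pos.mpr (by positivity)
  have hcc : c * c = (Real.sqrt 2)⁻¹ := Real.mul_self_sqrt (by positivity)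
  have hcic : c⁻¹ * c⁻¹ = Real.sqrt 2 := by
    rw [← mul_inv, hcc, inv_inv]
  have hcmul : c * c⁻¹ = 1 := mul_inv_cancel₀ hcpos.ne'
  have hcmul' : c⁻¹ * c = 1 := inv_mul_cancel₀ hcpos.ne'
  set X := c • A - c⁻¹ • (A⁻¹ * E) with hXdef
  have hXt : Xᵀ = c • A - c⁻¹ • (E * A⁻¹) := by
    rw [hXdef, Matrix.transpose_sub, Matrix.transpose_smul, Matrix.transpose_smul,
      Matrix.transpose_mul, hEh, hAinvh, hAh]
  have h0 : 0 ≤ (X * Xᵀ).trace := trace_mul_transpose_self_nonneg X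
  have hexp : (X * Xᵀ).trace
      = (c * c) * (A * A).trace + (c⁻¹ * c⁻¹) * ((A⁻¹ * E) * (E * A⁻¹)).trace
        - (c * c⁻¹) * (A * (E * A⁻¹)).trace - (c⁻¹ * c) * ((A⁻¹ * E) * A).trace := by
    rw [hXdef, hXt]
    simp only [Matrix.sub_mul, Matrix.mul_sub, smul_mul_assoc, mul_smul_comm, smul_smul,
      Matrix.trace_sub, Matrix.trace_smul, smul_eq_mul]
    ring
  have tr1 : (A * (E * A⁻¹)).trace = E.trace := by
    calc (A * (E * A⁻¹)).trace = ((E * A⁻¹) * A).trace := Matrix.trace_mul_comm _ _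
      _ = (E * (A⁻¹ * A)).trace := by rw [Matrix.mul_assoc]
      _ = E.trace := by rw [Matrix.nonsing_inv_mul _ hAdet, Matrix.mul_one]
  have tr2 : ((A⁻¹ * E) * A).trace = E.trace := by
    calc ((A⁻¹ * E) * A).trace = (A * (A⁻¹ * E)).trace := Matrix.trace_mul_comm _ _
      _ = E.trace := by rw [Matrix.mul_nonsing_inv_cancel_left _ _ hAdet]
  have hAAinv : A⁻¹ * A⁻¹ = P⁻¹ := by rw [← Matrix.mul_inv_rev, hAA]
  have tr3 : ((A⁻¹ * E) * (E * A⁻¹)).trace = (P⁻¹ * (E * E)).trace := by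
    calc ((A⁻¹ * E) * (E * A⁻¹)).trace
        = (A⁻¹ * (E * (E * A⁻¹))).trace := by rw [Matrix.mul_assoc]
      _ = ((E * (E * A⁻¹)) * A⁻¹).trace := Matrix.trace_mul_comm _ _
      _ = ((E * E) * (A⁻¹ * A⁻¹)).trace := by simp only [Matrix.mul_assoc]
      _ = (P⁻¹ * (E * E)).trace := by rw [hAAinv, Matrix.trace_mul_comm]
  rw [hexp, hAA, tr1, tr2, tr3, hcc, hcic, hcmul, hcmul'] at h0
  -- now h0 : 0 ≤ (√2)⁻¹ * P.trace + √2 * (P⁻¹*(E*E)).trace - 1*E.trace - 1*E.trace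
  rw [tTM.symm] at *
  have h0' : E.trace + E.trace ≤ (Real.sqrt 2)⁻¹ * (T * M).trace
      + Real.sqrt 2 * (P⁻¹ * (E * E)).trace := by linarith
  have key := mul_le_mul_of_nonneg_left h0' hs2pos.le
  have l1 : Real.sqrt 2 * ((Real.sqrt 2)⁻¹ * (T * M).trace) = (T * M).trace := by
    rw [← mul_assoc, mul_inv_cancel₀ hs2pos.ne', one_mul]
  have l2 : Real.sqrt 2 * (Real.sqrt 2 * (P⁻¹ * (E * E)).trace)
      = 2 * (P⁻¹ * (E * E)).trace := by rw [← mul_assoc, hc2]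
  rw [mul_add, mul_add, l1, l2] at key
  have := tTQ
  linarith

end GSaux
section DiagExtra

variable {n : ℕ} {β : Fin n → ℝ}

lemma invSqrt_mul_diagB (hβ : ∀ k, 0 < β k) :
    invSqrtDiag β * Matrix.diagonal β = sqrtDiag β := by
  rw [invSqrtDiag, sqrtDiag, Matrix.diagonal_mul_diagonal]
  refine congrArg Matrix.diagonal (funext fun k => ?_)
  have hb : β k = Real.sqrt (β k) * Real.sqrt (β k) := (Real.mul_self_sqrt (hβ k).le).symm
  nth_rewrite 2 [hb]
  rw [← mul_assoc, inv_mul_cancel₀ (Real.sqrt_pos.mpr (hβ k)).ne', one_mul]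

lemma diagB_mul_invSqrt (hβ : ∀ k, 0 < β k) :
    Matrix.diagonal β * invSqrtDiag β = sqrtDiag β := by
  rw [invSqrtDiag, sqrtDiag, Matrix.diagonal_mul_diagonal]
  refine congrArg Matrix.diagonal (funext fun k => ?_)
  have hb : β k = Real.sqrt (β k) * Real.sqrt (β k) := (Real.mul_self_sqrt (hβ k).le).symm
  nth_rewrite 1 [hb]
  rw [mul_assoc, mul_inv_cancel₀ (Real.sqrt_pos.mpr (hβ k)).ne', mul_one]

lemma invSqrtDiag_inv (hβ : ∀ k, 0 < β k) : (invSqrtDiag β)⁻¹ = sqrtDiag β :=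
  Matrix.inv_eq_right_inv (inv_mul_sqrtDiag hβ)

end DiagExtra

namespace GSaux

set_option linter.unusedSectionVars false
set_option maxHeartbeats 1600000

variable {n : ℕ}

lemma obj_eq (Qt : Matrix (Fin n) (Fin n) ℝ) (β h : Fin n → ℝ) (hβ : ∀ k, 0 < β k)
    (S : Matrix (Fin n) (Fin n) ℝ) :
    (1 / 4) * dot h ((invSqrtDiag β * S * invSqrtDiag β) *ᵥ h)
      + (((1 / 2 : ℝ) • S + S⁻¹) * (sqrtDiag β * Qt * sqrtDiag β)).trace
    = (1 / 2) * ((invSqrtDiag β * S * invSqrtDiag β) * Mm Qt β h).trace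
      + ((invSqrtDiag β * S * invSqrtDiag β)⁻¹ * Qt).trace := by
  set T := invSqrtDiag β * S * invSqrtDiag β with hTdef
  have hq : dot h (T *ᵥ h) = (T * vecMulVec h h).trace := by
    rw [dot_eq]; exact dot_mulVec_eq_trace h T
  have hTinv : T⁻¹ = sqrtDiag β * (S⁻¹ * sqrtDiag β) := by
    rw [hTdef, Matrix.mul_inv_rev, Matrix.mul_inv_rev, invSqrtDiag_inv hβ]
  have p3 : (T⁻¹ * Qt).trace = (S⁻¹ * (sqrtDiag β * Qt * sqrtDiag β)).trace := by
    rw [hTinv]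
    calc (sqrtDiag β * (S⁻¹ * sqrtDiag β) * Qt).trace
        = (sqrtDiag β * ((S⁻¹ * sqrtDiag β) * Qt)).trace := by rw [Matrix.mul_assoc]
      _ = (((S⁻¹ * sqrtDiag β) * Qt) * sqrtDiag β).trace := Matrix.trace_mul_comm _ _
      _ = (S⁻¹ * (sqrtDiag β * Qt * sqrtDiag β)).trace := by simp only [Matrix.mul_assoc]
  have p2 : (T * (Matrix.diagonal β * Qt * Matrix.diagonal β)).trace
      = (S * (sqrtDiag β * Qt * sqrtDiag β)).trace := by
    have grouped : T * (Matrix.diagonal β * Qt * Matrix.diagonal β)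
        = invSqrtDiag β * (S * ((invSqrtDiag β * Matrix.diagonal β) * (Qt * Matrix.diagonal β))) := by
      rw [hTdef]; simp only [Matrix.mul_assoc]
    rw [grouped, invSqrt_mul_diagB hβ]
    calc (invSqrtDiag β * (S * (sqrtDiag β * (Qt * Matrix.diagonal β)))).trace
        = ((S * (sqrtDiag β * (Qt * Matrix.diagonal β))) * invSqrtDiag β).trace :=
          Matrix.trace_mul_comm _ _
      _ = (S * (sqrtDiag β * (Qt * (Matrix.diagonal β * invSqrtDiag β)))).trace := by
          simp only [Matrix.mul_assoc]
      _ = (S * (sqrtDiag β * Qt * sqrtDiag β)).trace := by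
          rw [diagB_mul_invSqrt hβ]; simp only [Matrix.mul_assoc]
  have lhs1 : (((1 / 2 : ℝ) • S + S⁻¹) * (sqrtDiag β * Qt * sqrtDiag β)).trace
      = (1 / 2) * (S * (sqrtDiag β * Qt * sqrtDiag β)).trace
        + (S⁻¹ * (sqrtDiag β * Qt * sqrtDiag β)).trace := by
    rw [Matrix.add_mul, smul_mul_assoc, Matrix.trace_add, Matrix.trace_smul, smul_eq_mul]
  have rhs1 : (T * Mm Qt β h).trace
      = (1 / 2) * (T * vecMulVec h h).trace
        + (T * (Matrix.diagonal β * Qt * Matrix.diagonal β)).trace := by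
    rw [Mm, Matrix.mul_add, mul_smul_comm, Matrix.trace_add, Matrix.trace_smul, smul_eq_mul]
  rw [lhs1, rhs1, hq, p2, p3]
  ring

end GSaux
namespace GSaux

set_option linter.unusedSectionVars false
set_option maxHeartbeats 1600000

variable {n : ℕ}

lemma lambda_decomp {Λ : Matrix (Fin n) (Fin n) ℝ} (hsym : Λ.IsSymm)
    (hpsd : (Λ - Real.sqrt 2 • (1 : Matrix (Fin n) (Fin n) ℝ)).PosSemidef) :
    (Λ - msqrt (Λ * Λ - (2 : ℝ) • (1 : Matrix (Fin n) (Fin n) ℝ))).PosDef ∧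
      Λ = (1 / 2 : ℝ) • (Λ - msqrt (Λ * Λ - (2 : ℝ) • (1 : Matrix (Fin n) (Fin n) ℝ)))
        + (Λ - msqrt (Λ * Λ - (2 : ℝ) • (1 : Matrix (Fin n) (Fin n) ℝ)))⁻¹ := by
  have hc2 : Real.sqrt 2 * Real.sqrt 2 = 2 := Real.mul_self_sqrt (by norm_num)
  have hcpos : (0:ℝ) < Real.sqrt 2 := Real.sqrt_pos.mpr (by norm_num)
  have hΛh : Λ.IsHermitian := by
    rw [Matrix.IsHermitian, conjTranspose_eq_transpose_of_trivial]; exact hsym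
  have hc1pd : ((Real.sqrt 2) • (1 : Matrix (Fin n) (Fin n) ℝ)).PosDef :=
    posDef_smul Matrix.PosDef.one hcpos
  have hΛpd : Λ.PosDef := by
    have h1 := Matrix.PosDef.posSemidef_add hpsd hc1pd
    have h2 : (Λ - Real.sqrt 2 • (1 : Matrix (Fin n) (Fin n) ℝ))
        + Real.sqrt 2 • (1 : Matrix (Fin n) (Fin n) ℝ) = Λ := by abel
    rwa [h2] at h1
  have e1 : Λ * ((Real.sqrt 2) • (1 : Matrix (Fin n) (Fin n) ℝ)) = Real.sqrt 2 • Λ := by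
    rw [mul_smul_comm, Matrix.mul_one]
  have e2 : ((Real.sqrt 2) • (1 : Matrix (Fin n) (Fin n) ℝ)) * Λ = Real.sqrt 2 • Λ := by
    rw [smul_mul_assoc, Matrix.one_mul]
  have e3 : ((Real.sqrt 2) • (1 : Matrix (Fin n) (Fin n) ℝ))
      * ((Real.sqrt 2) • (1 : Matrix (Fin n) (Fin n) ℝ)) = (2:ℝ) • 1 := by
    rw [smul_mul_assoc, mul_smul_comm, Matrix.one_mul, smul_smul, hc2]
  have hprod1 : (Λ - Real.sqrt 2 • 1) * (Λ + Real.sqrt 2 • 1)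
      = Λ * Λ - (2:ℝ) • (1 : Matrix (Fin n) (Fin n) ℝ) := by
    rw [Matrix.sub_mul, Matrix.mul_add, Matrix.mul_add, e1, e2, e3]
    abel
  have hprod2 : (Λ + Real.sqrt 2 • 1) * (Λ - Real.sqrt 2 • 1)
      = Λ * Λ - (2:ℝ) • (1 : Matrix (Fin n) (Fin n) ℝ) := by
    rw [Matrix.add_mul, Matrix.mul_sub, Matrix.mul_sub, e1, e2, e3]
    abel
  have hpluspd : (Λ + Real.sqrt 2 • (1 : Matrix (Fin n) (Fin n) ℝ)).PosDef :=
    hΛpd.add_posSemidef hc1pd.posSemidef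
  have hA2psd : (Λ * Λ - (2:ℝ) • (1 : Matrix (Fin n) (Fin n) ℝ)).PosSemidef := by
    rw [← hprod1]
    exact posSemidef_mul_of_commute hpsd hpluspd.posSemidef (by rw [hprod1, hprod2])
      (commute_sqrt hpsd (by rw [hprod1, hprod2]))
  set R := msqrt (Λ * Λ - (2:ℝ) • (1 : Matrix (Fin n) (Fin n) ℝ)) with hRdef
  have hRpsd : R.PosSemidef := msqrt_posSemidef hA2psd
  have hRR : R * R = Λ * Λ - (2:ℝ) • 1 := msqrt_mul_self hA2psd
  have hcommΛR : Λ * R = R * Λ := by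
    apply commute_msqrt hA2psd
    have c1 : Λ * ((2:ℝ) • (1 : Matrix (Fin n) (Fin n) ℝ)) = (2:ℝ) • Λ := by
      rw [mul_smul_comm, Matrix.mul_one]
    have c2 : ((2:ℝ) • (1 : Matrix (Fin n) (Fin n) ℝ)) * Λ = (2:ℝ) • Λ := by
      rw [smul_mul_assoc, Matrix.one_mul]
    rw [Matrix.mul_sub, Matrix.sub_mul, c1, c2, Matrix.mul_assoc]
  have hSmul : (Λ - R) * (Λ + R) = (2:ℝ) • (1 : Matrix (Fin n) (Fin n) ℝ) := by
    rw [Matrix.sub_mul, Matrix.mul_add, Matrix.mul_add, ← hcommΛR, hRR]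
    abel
  have hplusRpd : (Λ + R).PosDef := hΛpd.add_posSemidef hRpsd
  have hSeq : Λ - R = (2:ℝ) • (Λ + R)⁻¹ := by
    calc Λ - R = (Λ - R) * ((Λ + R) * (Λ + R)⁻¹) := by
          rw [mul_inv_cancel_pd hplusRpd, Matrix.mul_one]
      _ = ((Λ - R) * (Λ + R)) * (Λ + R)⁻¹ := by rw [Matrix.mul_assoc]
      _ = ((2:ℝ) • (1 : Matrix (Fin n) (Fin n) ℝ)) * (Λ + R)⁻¹ := by rw [hSmul]
      _ = (2:ℝ) • (Λ + R)⁻¹ := by rw [smul_mul_assoc, Matrix.one_mul]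
  have hSpd : (Λ - R).PosDef := by
    rw [hSeq]; exact posDef_smul hplusRpd.inv (by norm_num)
  have hSinv : (Λ - R)⁻¹ = (2⁻¹:ℝ) • (Λ + R) := by
    apply Matrix.inv_eq_right_inv
    rw [mul_smul_comm, hSmul, smul_smul]
    norm_num
  refine ⟨hSpd, ?_⟩
  rw [hSinv]
  have : (1/2:ℝ) • (Λ - R) + (2⁻¹:ℝ) • (Λ + R)
      = ((1/2:ℝ) + 2⁻¹) • Λ + ((2⁻¹:ℝ) - (1/2:ℝ)) • R := by
    rw [smul_sub, smul_add, add_smul, sub_smul]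
    abel
  rw [this]
  norm_num

end GSaux
namespace GSaux

set_option linter.unusedSectionVars false
set_option maxHeartbeats 3200000

variable {n : ℕ}

lemma sqrt_mul_binv {β : Fin n → ℝ} (hβ : ∀ k, 0 < β k) :
    sqrtDiag β * Matrix.diagonal (fun k => (β k)⁻¹) = invSqrtDiag β := by
  rw [sqrtDiag, invSqrtDiag, Matrix.diagonal_mul_diagonal]
  refine congrArg Matrix.diagonal (funext fun k => ?_)
  rw [← div_eq_mul_inv, Real.sqrt_div_self', one_div]

lemma binv_mul_sqrt {β : Fin n → ℝ} (hβ : ∀ k, 0 < β k) :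
    Matrix.diagonal (fun k => (β k)⁻¹) * sqrtDiag β = invSqrtDiag β := by
  rw [sqrtDiag, invSqrtDiag, Matrix.diagonal_mul_diagonal]
  refine congrArg Matrix.diagonal (funext fun k => ?_)
  rw [mul_comm, ← div_eq_mul_inv, Real.sqrt_div_self', one_div]

/-- Construction of the optimal `Λ`. -/
lemma exists_optimal (Qt : Matrix (Fin n) (Fin n) ℝ) (hQtpd : Qt.PosDef)
    (β h : Fin n → ℝ) (hβ : ∀ k, 0 < β k) :
    ∃ Λ : Matrix (Fin n) (Fin n) ℝ, Λ.IsSymm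
      ∧ (Λ - Real.sqrt 2 • (1 : Matrix (Fin n) (Fin n) ℝ)).PosSemidef
      ∧ (1 / 4) * dot h (Matrix.mulVec
            (invSqrtDiag β *
              (Λ - msqrt (Λ * Λ - (2 : ℝ) • (1 : Matrix (Fin n) (Fin n) ℝ))) *
              invSqrtDiag β) h)
          + Matrix.trace (Λ * (sqrtDiag β * Qt * sqrtDiag β)) = GSE n β h Qt := by
  have hc2 : Real.sqrt 2 * Real.sqrt 2 = 2 := Real.mul_self_sqrt (by norm_num)
  have hcpos : (0:ℝ) < Real.sqrt 2 := Real.sqrt_pos.mpr (by norm_num)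
  -- basic matrices
  have hMpd : (Mm Qt β h).PosDef := Mm_posDef h hQtpd hβ
  set G := msqrt (Mm Qt β h) with hGdef
  have hGpd : G.PosDef := msqrt_posDef hMpd
  have hGG : G * G = Mm Qt β h := msqrt_mul_self hMpd.posSemidef
  have hGh : Gᵀ = G := herm_transpose_eq (msqrt_herm hMpd.posSemidef)
  have hGdet : IsUnit G.det := posDef_isUnit_det hGpd
  have hGinvh : (G⁻¹)ᵀ = G⁻¹ := by rw [Matrix.transpose_nonsing_inv, hGh]
  have hGinvdet : IsUnit (G⁻¹).det := posDef_isUnit_det hGpd.inv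
  have hDpd : (G * Qt * G).PosDef := by
    have := posDef_conj hQtpd hGdet; rwa [hGh] at this
  set E := msqrt (G * Qt * G) with hEdef
  have hEpd : E.PosDef := msqrt_posDef hDpd
  have hEE : E * E = G * Qt * G := msqrt_mul_self hDpd.posSemidef
  have hEh : Eᵀ = E := herm_transpose_eq (msqrt_herm hDpd.posSemidef)
  have hEdet : IsUnit E.det := posDef_isUnit_det hEpd
  -- N and S
  set N := sqrtDiag β * (G⁻¹ * E * G⁻¹) * sqrtDiag β with hNdef
  have hGEGpd : (G⁻¹ * E * G⁻¹).PosDef := by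
    have := posDef_conj hEpd hGinvdet; rwa [hGinvh] at this
  have hNpd : N.PosDef := by
    have := posDef_conj hGEGpd (posDef_isUnit_det (sqrtDiag_posDef hβ))
    rwa [sqrtDiag_transpose] at this
  set S := Real.sqrt 2 • N with hSdef
  have hSpd : S.PosDef := posDef_smul hNpd hcpos
  have hSdet : IsUnit S.det := posDef_isUnit_det hSpd
  have hSh : Sᵀ = S := herm_transpose_eq hSpd.1
  have hSinvh : (S⁻¹)ᵀ = S⁻¹ := by rw [Matrix.transpose_nonsing_inv, hSh]
  have hSS1 : S * S⁻¹ = 1 := mul_inv_cancel_pd hSpd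
  have hS1S : S⁻¹ * S = 1 := inv_mul_cancel_pd hSpd
  -- V = sqrt S and pieces
  set V := msqrt S with hVdef
  have hVpd : V.PosDef := msqrt_posDef hSpd
  have hVV : V * V = S := msqrt_mul_self hSpd.posSemidef
  have hVh : Vᵀ = V := herm_transpose_eq (msqrt_herm hSpd.posSemidef)
  have hVdet : IsUnit V.det := posDef_isUnit_det hVpd
  have hVinvh : (V⁻¹)ᵀ = V⁻¹ := by rw [Matrix.transpose_nonsing_inv, hVh]
  have hVinvVinv : V⁻¹ * V⁻¹ = S⁻¹ := by rw [← Matrix.mul_inv_rev, hVV]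
  have m1 : V⁻¹ * (S * S) * V⁻¹ = S := by
    rw [← hVV]
    simp only [Matrix.mul_assoc]
    rw [Matrix.mul_nonsing_inv _ hVdet, Matrix.mul_one,
      Matrix.nonsing_inv_mul_cancel_left _ _ hVdet]
  have m2 : V⁻¹ * S * V⁻¹ = 1 := by
    rw [← hVV]
    simp only [Matrix.mul_assoc]
    rw [Matrix.mul_nonsing_inv _ hVdet, Matrix.mul_one, Matrix.nonsing_inv_mul _ hVdet]
  have m3 : V⁻¹ * (1 : Matrix (Fin n) (Fin n) ℝ) * V⁻¹ = S⁻¹ := by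
    rw [Matrix.mul_one, hVinvVinv]
  -- the candidate
  set Λ := (1 / 2 : ℝ) • S + S⁻¹ with hΛdef
  have hΛsym : Λ.IsSymm := by
    rw [Matrix.IsSymm, hΛdef, Matrix.transpose_add, Matrix.transpose_smul, hSh, hSinvh]
  -- feasibility
  set X := (V * V - Real.sqrt 2 • (1 : Matrix (Fin n) (Fin n) ℝ)) * V⁻¹ with hXdef
  have hXt : Xᵀ = V⁻¹ * (V * V - Real.sqrt 2 • (1 : Matrix (Fin n) (Fin n) ℝ)) := by
    rw [hXdef, Matrix.transpose_mul, Matrix.transpose_sub, Matrix.transpose_mul,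
      Matrix.transpose_smul, Matrix.transpose_one, hVh, hVinvh]
  have f1 : S * (Real.sqrt 2 • (1 : Matrix (Fin n) (Fin n) ℝ)) = Real.sqrt 2 • S := by
    rw [mul_smul_comm, Matrix.mul_one]
  have f2 : (Real.sqrt 2 • (1 : Matrix (Fin n) (Fin n) ℝ)) * S = Real.sqrt 2 • S := by
    rw [smul_mul_assoc, Matrix.one_mul]
  have f3 : (Real.sqrt 2 • (1 : Matrix (Fin n) (Fin n) ℝ))
      * (Real.sqrt 2 • (1 : Matrix (Fin n) (Fin n) ℝ)) = (2:ℝ) • 1 := by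
    rw [smul_mul_assoc, mul_smul_comm, Matrix.one_mul, smul_smul, hc2]
  have hXXexp : Xᵀ * X
      = S - ((2:ℝ) * Real.sqrt 2) • (1 : Matrix (Fin n) (Fin n) ℝ) + (2:ℝ) • S⁻¹ := by
    have hmidprod : (V * V - Real.sqrt 2 • (1 : Matrix (Fin n) (Fin n) ℝ))
        * (V * V - Real.sqrt 2 • (1 : Matrix (Fin n) (Fin n) ℝ))
        = S * S - Real.sqrt 2 • S - Real.sqrt 2 • S + (2:ℝ) • 1 := by
      rw [hVV, Matrix.sub_mul, Matrix.mul_sub, Matrix.mul_sub, f1, f2, f3]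
      abel
    have hXX1 : Xᵀ * X = V⁻¹ * (S * S - Real.sqrt 2 • S - Real.sqrt 2 • S + (2:ℝ) • 1) * V⁻¹ := by
      rw [hXt, hXdef, ← hmidprod]
      simp only [Matrix.mul_assoc]
    rw [hXX1]
    simp only [Matrix.mul_sub, Matrix.mul_add, Matrix.sub_mul, Matrix.add_mul,
      mul_smul_comm, smul_mul_assoc]
    rw [m1, m2, m3]
    module
  have hfeas : (Λ - Real.sqrt 2 • (1 : Matrix (Fin n) (Fin n) ℝ)).PosSemidef := by
    have hXXpsd : (Xᵀ * X).PosSemidef := by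
      have := Matrix.posSemidef_conjTranspose_mul_self X
      rwa [conjTranspose_eq_transpose_of_trivial] at this
    have heq : Λ - Real.sqrt 2 • (1 : Matrix (Fin n) (Fin n) ℝ) = (1/2:ℝ) • (Xᵀ * X) := by
      rw [hXXexp, hΛdef]
      module
    rw [heq]
    exact posSemidef_smul hXXpsd (by norm_num)
  -- the K chain
  set Binv := Matrix.diagonal (fun k => (β k)⁻¹) with hBinvdef
  have hBinvpd : Binv.PosDef := diagBinv_posDef hβ
  set K := G * Binv * G with hKdef
  have hKpd : K.PosDef := by
    have := posDef_conj hBinvpd hGdet; rwa [hGh] at this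
  have hKh : Kᵀ = K := herm_transpose_eq hKpd.1
  have hKdet : IsUnit K.det := posDef_isUnit_det hKpd
  set u : Fin n → ℝ := fun k => (β k)⁻¹ * h k with hudef
  have hBvec : Binv * vecMulVec h h * Binv = vecMulVec u u := by
    ext i j
    rw [Matrix.mul_diagonal, Matrix.diagonal_mul, vecMulVec_apply, vecMulVec_apply]
    show (β i)⁻¹ * (h i * h j) * (β j)⁻¹ = ((β i)⁻¹ * h i) * ((β j)⁻¹ * h j)
    ring
  have hBQB : Binv * (Matrix.diagonal β * Qt * Matrix.diagonal β) * Binv = Qt := by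
    calc Binv * (Matrix.diagonal β * Qt * Matrix.diagonal β) * Binv
        = (Binv * Matrix.diagonal β) * (Qt * (Matrix.diagonal β * Binv)) := by
          simp only [Matrix.mul_assoc]
      _ = Qt := by
          rw [diagBinv_mul_diagB hβ, diagB_mul_diagBinv hβ, Matrix.one_mul, Matrix.mul_one]
  have hKK : K * K = G * (Binv * Mm Qt β h * Binv) * G := by
    rw [hKdef, ← hGG]; simp only [Matrix.mul_assoc]
  have hmidM : Binv * Mm Qt β h * Binv = (1/2:ℝ) • vecMulVec u u + Qt := by
    rw [Mm, Matrix.mul_add, Matrix.add_mul, mul_smul_comm, smul_mul_assoc, hBvec, hBQB]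
  have hKKEE : K * K - E * E = G * ((1/2:ℝ) • vecMulVec u u) * G := by
    rw [hKK, hmidM, hEE, Matrix.mul_add, Matrix.add_mul]
    abel
  have hKEpsd : (K * K - E * E).PosSemidef := by
    rw [hKKEE]
    have := psd_conj (posSemidef_smul (posSemidef_vecMulVec u) (by norm_num : (0:ℝ) ≤ 1/2)) G
    rwa [hGh] at this
  have hKmE : (K - E).PosSemidef := sub_posSemidef_of_sq hKpd hEpd.posSemidef hKEpsd
  have hKinvpd : (K⁻¹).PosDef := hKpd.inv
  have hBinvinv : Binv⁻¹ = Matrix.diagonal β := Matrix.inv_eq_right_inv (diagBinv_mul_diagB hβ)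
  have hKinv : K⁻¹ = G⁻¹ * (Matrix.diagonal β * G⁻¹) := by
    rw [hKdef, Matrix.mul_inv_rev, Matrix.mul_inv_rev, hBinvinv]
  set W := msqrt K⁻¹ with hWdef
  have hWpd : W.PosDef := msqrt_posDef hKinvpd
  have hWW : W * W = K⁻¹ := msqrt_mul_self hKinvpd.posSemidef
  have hWh : Wᵀ = W := herm_transpose_eq (msqrt_herm hKinvpd.posSemidef)
  have hKW : K * W = W * K := commute_msqrt hKinvpd.posSemidef
    (by rw [mul_inv_cancel_pd hKpd, inv_mul_cancel_pd hKpd])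
  set F := W * E * W with hFdef
  have hFpsd : F.PosSemidef := by
    have := psd_conj hEpd.posSemidef W; rwa [hWh] at this
  have hWKW : W * K * W = 1 := by
    calc W * K * W = (K * W) * W := by rw [← hKW]
      _ = K * (W * W) := by rw [Matrix.mul_assoc]
      _ = 1 := by rw [hWW, mul_inv_cancel_pd hKpd]
  have h1F : (1 : Matrix (Fin n) (Fin n) ℝ) - F = W * (K - E) * W := by
    rw [Matrix.mul_sub, Matrix.sub_mul, hWKW, hFdef]
  have h1Fpsd : ((1 : Matrix (Fin n) (Fin n) ℝ) - F).PosSemidef := by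
    rw [h1F]
    have := psd_conj hKmE W; rwa [hWh] at this
  set F2 := msqrt F with hF2def
  have hF2F2 : F2 * F2 = F := msqrt_mul_self hFpsd
  have hF2h : F2ᵀ = F2 := herm_transpose_eq (msqrt_herm hFpsd)
  have hFF2 : F * F2 = F2 * F := commute_msqrt hFpsd rfl
  have hFFpsd : (F - F * F).PosSemidef := by
    have k1 : F2 * ((1 : Matrix (Fin n) (Fin n) ℝ) - F) * F2 = F2 * F2 - F2 * F * F2 := by
      rw [Matrix.mul_sub, Matrix.mul_one, Matrix.sub_mul]
    have k2 : F2 * F * F2 = F * F := by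
      rw [← hFF2, Matrix.mul_assoc, hF2F2]
    have key : F - F * F = F2 * ((1 : Matrix (Fin n) (Fin n) ℝ) - F) * F2 := by
      rw [k1, k2, hF2F2]
    rw [key]
    have := psd_conj h1Fpsd F2; rwa [hF2h] at this
  have h1FFpsd : ((1 : Matrix (Fin n) (Fin n) ℝ) - F * F).PosSemidef := by
    have hsplit : (1 : Matrix (Fin n) (Fin n) ℝ) - F * F
        = ((1 : Matrix (Fin n) (Fin n) ℝ) - F) + (F - F * F) := by abel
    rw [hsplit]; exact h1Fpsd.add hFFpsd
  set Vk := msqrt K with hVkdef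
  have hVkpd : Vk.PosDef := msqrt_posDef hKpd
  have hVkVk : Vk * Vk = K := msqrt_mul_self hKpd.posSemidef
  have hVkh : Vkᵀ = Vk := herm_transpose_eq (msqrt_herm hKpd.posSemidef)
  have hVkdet : IsUnit Vk.det := posDef_isUnit_det hVkpd
  have hVkinv2 : Vk⁻¹ * Vk⁻¹ = K⁻¹ := by rw [← Matrix.mul_inv_rev, hVkVk]
  have hWVk : W = Vk⁻¹ := by
    rw [hWdef]
    exact msqrt_unique hVkpd.inv.posSemidef hKinvpd.posSemidef hVkinv2
  have hZ : (K - E * K⁻¹ * E).PosSemidef := by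
    have hmidcalc : Vk * (F * F) * Vk = E * K⁻¹ * E := by
      rw [hFdef, hWVk]
      calc Vk * ((Vk⁻¹ * E * Vk⁻¹) * (Vk⁻¹ * E * Vk⁻¹)) * Vk
          = (Vk * Vk⁻¹) * (E * ((Vk⁻¹ * Vk⁻¹) * (E * (Vk⁻¹ * Vk)))) := by
            simp only [Matrix.mul_assoc]
        _ = E * (K⁻¹ * E) := by
            rw [mul_inv_cancel_pd hVkpd, inv_mul_cancel_pd hVkpd, hVkinv2,
              Matrix.mul_one, Matrix.one_mul]
        _ = E * K⁻¹ * E := by rw [Matrix.mul_assoc]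
    have key : K - E * K⁻¹ * E = Vk * ((1 : Matrix (Fin n) (Fin n) ℝ) - F * F) * Vk := by
      rw [Matrix.mul_sub, Matrix.sub_mul, Matrix.mul_one, hVkVk, hmidcalc]
    rw [key]
    have := psd_conj h1FFpsd Vk; rwa [hVkh] at this
  -- 1 - N*N is psd
  have hNN : (1 : Matrix (Fin n) (Fin n) ℝ) - N * N
      = (sqrtDiag β * G⁻¹) * (K - E * K⁻¹ * E) * (G⁻¹ * sqrtDiag β) := by
    rw [Matrix.mul_sub, Matrix.sub_mul]
    congr 1
    · -- (bm*G⁻¹) * K * (G⁻¹*bm) = 1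
      symm
      rw [hKdef]
      calc (sqrtDiag β * G⁻¹) * (G * Binv * G) * (G⁻¹ * sqrtDiag β)
          = sqrtDiag β * ((G⁻¹ * G) * (Binv * (G * (G⁻¹ * sqrtDiag β)))) := by
            simp only [Matrix.mul_assoc]
        _ = sqrtDiag β * (Binv * sqrtDiag β) := by
            rw [inv_mul_cancel_pd hGpd, Matrix.one_mul,
              Matrix.mul_nonsing_inv_cancel_left _ _ hGdet]
        _ = (1 : Matrix (Fin n) (Fin n) ℝ) := by
            rw [binv_mul_sqrt hβ, sqrtDiag_mul_inv hβ]
    · -- N*N = (bm*G⁻¹) * (E*K⁻¹*E) * (G⁻¹*bm)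
      rw [hKinv, hNdef]
      calc (sqrtDiag β * (G⁻¹ * E * G⁻¹) * sqrtDiag β) * (sqrtDiag β * (G⁻¹ * E * G⁻¹) * sqrtDiag β)
          = sqrtDiag β * (G⁻¹ * (E * (G⁻¹ * ((sqrtDiag β * sqrtDiag β) * (G⁻¹ * (E * (G⁻¹ * sqrtDiag β))))))) := by
            simp only [Matrix.mul_assoc]
        _ = sqrtDiag β * (G⁻¹ * (E * (G⁻¹ * (Matrix.diagonal β * (G⁻¹ * (E * (G⁻¹ * sqrtDiag β))))))) := by
            rw [sqrtDiag_mul_self hβ]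
        _ = (sqrtDiag β * G⁻¹) * (E * (G⁻¹ * (Matrix.diagonal β * G⁻¹)) * E) * (G⁻¹ * sqrtDiag β) := by
            simp only [Matrix.mul_assoc]
  have h1NNpsd : ((1 : Matrix (Fin n) (Fin n) ℝ) - N * N).PosSemidef := by
    rw [hNN]
    have ht : (sqrtDiag β * G⁻¹)ᵀ = G⁻¹ * sqrtDiag β := by
      rw [Matrix.transpose_mul, hGinvh, sqrtDiag_transpose]
    have := psd_conj hZ (sqrtDiag β * G⁻¹)
    rwa [ht] at this
  have hmidpsd : ((2:ℝ) • (1 : Matrix (Fin n) (Fin n) ℝ) - S * S).PosSemidef := by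
    have hSSN : S * S = (2:ℝ) • (N * N) := by
      rw [hSdef, smul_mul_assoc, mul_smul_comm, smul_smul, hc2]
    have hrw : (2:ℝ) • (1 : Matrix (Fin n) (Fin n) ℝ) - S * S
        = (2:ℝ) • ((1 : Matrix (Fin n) (Fin n) ℝ) - N * N) := by
      rw [hSSN, smul_sub]
    rw [hrw]
    exact posSemidef_smul h1NNpsd (by norm_num)
  -- R0
  set R0 := S⁻¹ - (1/2:ℝ) • S with hR0def
  have m3s : V⁻¹ * ((2:ℝ) • (1 : Matrix (Fin n) (Fin n) ℝ)) * V⁻¹ = (2:ℝ) • S⁻¹ := by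
    rw [mul_smul_comm, smul_mul_assoc, Matrix.mul_one, hVinvVinv]
  have hR0eq : R0 = (1/2:ℝ) • (V⁻¹ * ((2:ℝ) • (1 : Matrix (Fin n) (Fin n) ℝ) - S * S) * V⁻¹) := by
    rw [Matrix.mul_sub, Matrix.sub_mul, m1, m3s, hR0def]
    module
  have hR0psd : R0.PosSemidef := by
    have hconj := psd_conj hmidpsd V⁻¹
    rw [hVinvh] at hconj
    rw [hR0eq]
    exact posSemidef_smul hconj (by norm_num)
  have hR0sq : R0 * R0 = Λ * Λ - (2:ℝ) • (1 : Matrix (Fin n) (Fin n) ℝ) := by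
    rw [hR0def, hΛdef]
    simp only [Matrix.sub_mul, Matrix.mul_sub, Matrix.add_mul, Matrix.mul_add,
      smul_mul_assoc, mul_smul_comm, smul_smul, hSS1, hS1S]
    module
  have hA2psd : (Λ * Λ - (2:ℝ) • (1 : Matrix (Fin n) (Fin n) ℝ)).PosSemidef := by
    rw [← hR0sq]
    have := Matrix.posSemidef_self_mul_conjTranspose R0
    rwa [hR0psd.1] at this
  have hmsqrtΛ : msqrt (Λ * Λ - (2:ℝ) • (1 : Matrix (Fin n) (Fin n) ℝ)) = R0 :=
    msqrt_unique hR0psd hA2psd hR0sq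
  have hdiff : Λ - msqrt (Λ * Λ - (2:ℝ) • (1 : Matrix (Fin n) (Fin n) ℝ)) = S := by
    rw [hmsqrtΛ, hΛdef, hR0def]
    module
  -- the value of the objective at Λ
  refine ⟨Λ, hΛsym, hfeas, ?_⟩
  rw [hdiff, hΛdef, obj_eq Qt β h hβ S]
  -- identify T
  have hTeq : invSqrtDiag β * S * invSqrtDiag β = Real.sqrt 2 • (G⁻¹ * (E * G⁻¹)) := by
    rw [hSdef, hNdef, mul_smul_comm, smul_mul_assoc]
    congr 1
    calc invSqrtDiag β * (sqrtDiag β * (G⁻¹ * E * G⁻¹) * sqrtDiag β) * invSqrtDiag β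
        = (invSqrtDiag β * sqrtDiag β) * (G⁻¹ * (E * (G⁻¹ * (sqrtDiag β * invSqrtDiag β)))) := by
          simp only [Matrix.mul_assoc]
      _ = G⁻¹ * (E * G⁻¹) := by
          rw [inv_mul_sqrtDiag hβ, sqrtDiag_mul_inv hβ, Matrix.mul_one, Matrix.one_mul]
  have t1 : ((Real.sqrt 2 • (G⁻¹ * (E * G⁻¹))) * Mm Qt β h).trace = Real.sqrt 2 * E.trace := by
    rw [smul_mul_assoc, Matrix.trace_smul, smul_eq_mul, ← hGG]
    congr 1
    calc (G⁻¹ * (E * G⁻¹) * (G * G)).trace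
        = (G⁻¹ * (E * (G⁻¹ * (G * G)))).trace := by simp only [Matrix.mul_assoc]
      _ = (G⁻¹ * (E * G)).trace := by rw [Matrix.nonsing_inv_mul_cancel_left _ _ hGdet]
      _ = ((E * G) * G⁻¹).trace := Matrix.trace_mul_comm _ _
      _ = (E * (G * G⁻¹)).trace := by rw [Matrix.mul_assoc]
      _ = E.trace := by rw [Matrix.mul_nonsing_inv _ hGdet, Matrix.mul_one]
  have hEinv : IsUnit E.det := hEdet
  have hTinv : (Real.sqrt 2 • (G⁻¹ * (E * G⁻¹)))⁻¹ = (Real.sqrt 2)⁻¹ • (G * (E⁻¹ * G)) := by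
    apply Matrix.inv_eq_right_inv
    rw [smul_mul_assoc, mul_smul_comm, smul_smul, mul_inv_cancel₀ hcpos.ne', one_smul]
    calc G⁻¹ * (E * G⁻¹) * (G * (E⁻¹ * G))
        = G⁻¹ * (E * (G⁻¹ * (G * (E⁻¹ * G)))) := by simp only [Matrix.mul_assoc]
      _ = G⁻¹ * (E * (E⁻¹ * G)) := by rw [Matrix.nonsing_inv_mul_cancel_left _ _ hGdet]
      _ = G⁻¹ * G := by rw [Matrix.mul_nonsing_inv_cancel_left _ _ hEdet]
      _ = 1 := Matrix.nonsing_inv_mul _ hGdet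
  have t2 : (((Real.sqrt 2)⁻¹ • (G * (E⁻¹ * G))) * Qt).trace = (Real.sqrt 2)⁻¹ * E.trace := by
    rw [smul_mul_assoc, Matrix.trace_smul, smul_eq_mul]
    congr 1
    calc (G * (E⁻¹ * G) * Qt).trace
        = (G * (E⁻¹ * (G * Qt))).trace := by simp only [Matrix.mul_assoc]
      _ = ((E⁻¹ * (G * Qt)) * G).trace := Matrix.trace_mul_comm _ _
      _ = (E⁻¹ * (G * Qt * G)).trace := by simp only [Matrix.mul_assoc]
      _ = (E⁻¹ * (E * E)).trace := by rw [← hEE]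
      _ = (E⁻¹ * E * E).trace := by rw [Matrix.mul_assoc]
      _ = E.trace := by rw [inv_mul_cancel_pd hEpd, Matrix.one_mul]
  rw [hTeq, hTinv, t1, t2, GSE_eq, ← hGdef, ← hEdef]
  have hfin : (1/2:ℝ) * (Real.sqrt 2 * E.trace) + (Real.sqrt 2)⁻¹ * E.trace
      = Real.sqrt 2 * E.trace := by
    have hinv2 : (Real.sqrt 2)⁻¹ = Real.sqrt 2 / 2 := by
      rw [eq_div_iff (two_ne_zero : (2:ℝ) ≠ 0), inv_mul_eq_iff_eq_mul₀ hcpos.ne']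
      rw [hc2]
    rw [hinv2]
    ring
  exact hfin

end GSaux
namespace GSaux

set_option linter.unusedSectionVars false
set_option maxHeartbeats 1600000

variable {n : ℕ}

lemma lower_bound (Qt : Matrix (Fin n) (Fin n) ℝ) (hQtpd : Qt.PosDef)
    (β h : Fin n → ℝ) (hβ : ∀ k, 0 < β k) {Λ : Matrix (Fin n) (Fin n) ℝ}
    (hsym : Λ.IsSymm)
    (hpsd : (Λ - Real.sqrt 2 • (1 : Matrix (Fin n) (Fin n) ℝ)).PosSemidef) :
    GSE n β h Qt ≤ (1 / 4) * dot h (Matrix.mulVec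
        (invSqrtDiag β *
          (Λ - msqrt (Λ * Λ - (2 : ℝ) • (1 : Matrix (Fin n) (Fin n) ℝ))) *
          invSqrtDiag β) h)
      + Matrix.trace (Λ * (sqrtDiag β * Qt * sqrtDiag β)) := by
  obtain ⟨hSpd, hΛeq⟩ := lambda_decomp hsym hpsd
  set S := Λ - msqrt (Λ * Λ - (2 : ℝ) • (1 : Matrix (Fin n) (Fin n) ℝ)) with hSdef
  rw [hΛeq, obj_eq Qt β h hβ S, GSE_eq]
  have hTpd : (invSqrtDiag β * S * invSqrtDiag β).PosDef := by
    have := posDef_conj hSpd (posDef_isUnit_det (invSqrtDiag_posDef hβ))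
    rwa [invSqrtDiag_transpose] at this
  exact core_ineq (Mm_posDef h hQtpd hβ) hQtpd hTpd

end GSaux

/-- **Closed form of the ground state variational problem** (Proposition 5.2):
for positive definite `Q̃` and `β ∈ (0,∞)^n`,
`inf_{Λ ≥ √2 I} ( ¼ hᵀ𝛃^{-1/2}(Λ − √(Λ² − 2I))𝛃^{-1/2}h + Tr(Λ 𝛃^{1/2}Q̃𝛃^{1/2}) )
  = GSE(β, h, Q̃)`. -/
theorem ground_state_closed_form (n : ℕ) (hn : 1 ≤ n)
    (Qt : Matrix (Fin n) (Fin n) ℝ) (hQtsym : Qt.IsSymm) (hQtpd : Qt.PosDef)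
    (β : Fin n → ℝ) (hβ : ∀ k, 0 < β k) (h : Fin n → ℝ) :
    sInf ((fun Λ : Matrix (Fin n) (Fin n) ℝ =>
        (1 / 4) * dot h (Matrix.mulVec
            (invSqrtDiag β *
              (Λ - msqrt (Λ * Λ - (2 : ℝ) • (1 : Matrix (Fin n) (Fin n) ℝ))) *
              invSqrtDiag β) h)
          + Matrix.trace (Λ * (sqrtDiag β * Qt * sqrtDiag β))) ''
      {Λ : Matrix (Fin n) (Fin n) ℝ | Λ.IsSymm ∧
        (Λ - Real.sqrt 2 • (1 : Matrix (Fin n) (Fin n) ℝ)).PosSemidef})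
    = GSE n β h Qt := by
  obtain ⟨Λ₀, hsym₀, hpsd₀, hval₀⟩ := GSaux.exists_optimal Qt hQtpd β h hβ
  apply le_antisymm
  · apply csInf_le
    · refine ⟨GSE n β h Qt, ?_⟩
      rintro x ⟨Λ, ⟨hsym, hpsd⟩, rfl⟩
      exact GSaux.lower_bound Qt hQtpd β h hβ hsym hpsd
    · exact ⟨Λ₀, ⟨hsym₀, hpsd₀⟩, hval₀⟩
  · apply le_csInf
    · exact ⟨_, ⟨Λ₀, ⟨hsym₀, hpsd₀⟩, rfl⟩⟩
    · rintro x ⟨Λ, ⟨hsym, hpsd⟩, rfl⟩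
      exact GSaux.lower_bound Qt hQtpd β h hβ hsym hpsd

end
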